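/- Let G be a finite group with normal subgroups H, K such that the set Comm(H,K) = {[h,k] : h ∈ H, k ∈ K} has size at most C. Then [H,K] is finite of C-bounded order; more precisely, writing Comm(H,K) = {[h₁,k₁],...,[h_C,k_C]}, the subgroups H₀ = ⟨h₁,...,h_C, Comm(H,K)⟩ and K₀ = ⟨k₁,...,k_C, Comm(H,K)⟩ satisfy [H₀,K₀] = [H,K]. -/

import Mathlib

/-- The set of commutators `Comm(H,K) = {[h,k] : h ∈ H, k ∈ K}` with `[h,k] = h⁻¹k⁻¹hk`. -/
def commSet {G : Type*} [Group G] (X Y : Set G) : Set G :=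
  {z : G | ∃ x ∈ X, ∃ y ∈ Y, z = x⁻¹ * y⁻¹ * x * y}

namespace StmtAux

open Subgroup Pointwise
open scoped commutatorElement

variable {G : Type*} [Group G]

lemma mem_commSet_of {X Y : Set G} {x y : G} (hx : x ∈ X) (hy : y ∈ Y) :
    x⁻¹ * y⁻¹ * x * y ∈ commSet X Y := ⟨x, hx, y, hy, rfl⟩

lemma commSet_mono {X Y X' Y' : Set G} (h1 : X ⊆ X') (h2 : Y ⊆ Y') :
    commSet X Y ⊆ commSet X' Y' := by
  rintro z ⟨x, hx, y, hy, rfl⟩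
  exact ⟨x, h1 hx, y, h2 hy, rfl⟩

lemma commSet_eq (H K : Subgroup G) :
    commSet (H : Set G) (K : Set G) = {g | ∃ g₁ ∈ H, ∃ g₂ ∈ K, ⁅g₁, g₂⁆ = g} := by
  ext z
  constructor
  · rintro ⟨x, hx, y, hy, rfl⟩
    exact ⟨x⁻¹, inv_mem hx, y⁻¹, inv_mem hy, by simp [commutatorElement_def]⟩
  · rintro ⟨a, ha, b, hb, rfl⟩
    refine ⟨a⁻¹, inv_mem ha, b⁻¹, inv_mem hb, ?_⟩
    simp [commutatorElement_def]

lemma closure_commSet (H K : Subgroup G) :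
    Subgroup.closure (commSet (H : Set G) (K : Set G)) = ⁅H, K⁆ := by
  rw [commSet_eq, Subgroup.commutator_def]

lemma commSet_subset_commutator (H K : Subgroup G) :
    commSet (H : Set G) (K : Set G) ⊆ (⁅H, K⁆ : Subgroup G) := by
  rw [← closure_commSet]
  exact subset_closure

lemma one_mem_commSet (H K : Subgroup G) : (1 : G) ∈ commSet (H : Set G) (K : Set G) := by
  have := mem_commSet_of (X := (H : Set G)) (Y := (K : Set G)) H.one_mem K.one_mem
  simpa using this

lemma commSet_map {G' : Type*} [Group G'] (f : G →* G') (H K : Subgroup G) :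
    commSet (↑(H.map f) : Set G') (↑(K.map f)) = f '' commSet (H : Set G) K := by
  ext z
  constructor
  · rintro ⟨x, hx, y, hy, rfl⟩
    obtain ⟨a, ha, rfl⟩ := Subgroup.mem_map.mp hx
    obtain ⟨b, hb, rfl⟩ := Subgroup.mem_map.mp hy
    exact ⟨a⁻¹ * b⁻¹ * a * b, ⟨a, ha, b, hb, rfl⟩, by simp⟩
  · rintro ⟨w, ⟨a, ha, b, hb, rfl⟩, rfl⟩
    refine ⟨f a, Subgroup.mem_map_of_mem f ha, f b, Subgroup.mem_map_of_mem f hb, by simp⟩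


/-- If `t = [x,k]` (commSet convention) and `x` commutes with `t`, then `[x^i, k] = t^i`. -/
lemma pow_comm_left {x k t : G} (ht : t = x⁻¹ * k⁻¹ * x * k) (hc : Commute x t) (i : ℕ) :
    (x ^ i)⁻¹ * k⁻¹ * (x ^ i) * k = t ^ i := by
  have h1 : k⁻¹ * x * k = x * t := by rw [ht]; group
  induction i with
  | zero => simp
  | succ n ih =>
    have h2 : (x ^ (n + 1))⁻¹ * k⁻¹ * x ^ (n + 1) * k
        = x⁻¹ * ((x ^ n)⁻¹ * k⁻¹ * x ^ n * k) * (k⁻¹ * x * k) := by group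
    rw [h2, ih, h1]
    have h3 : t ^ n * x = x * t ^ n := ((hc.pow_right n).eq).symm
    calc x⁻¹ * t ^ n * (x * t) = x⁻¹ * (t ^ n * x) * t := by group
      _ = x⁻¹ * (x * t ^ n) * t := by rw [h3]
      _ = t ^ (n + 1) := by rw [pow_succ]; group

/-- If `t = [h,x]` (commSet convention) and `t` commutes with `x`, then `[h, x^i] = t^i`. -/
lemma pow_comm_right {h x t : G} (ht : t = h⁻¹ * x⁻¹ * h * x) (hc : Commute t x) (i : ℕ) :
    h⁻¹ * (x ^ i)⁻¹ * h * (x ^ i) = t ^ i := by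
  have h1 : h⁻¹ * x⁻¹ * h = t * x⁻¹ := by rw [ht]; group
  induction i with
  | zero => simp
  | succ n ih =>
    have h2 : h⁻¹ * (x ^ (n + 1))⁻¹ * h * x ^ (n + 1)
        = (h⁻¹ * x⁻¹ * h) * (h⁻¹ * (x ^ n)⁻¹ * h * x ^ n) * x := by group
    rw [h2, ih, h1]
    have h3 : x⁻¹ * t ^ n = t ^ n * x⁻¹ := ((hc.pow_left n).inv_right.eq).symm
    calc t * x⁻¹ * t ^ n * x = t * (x⁻¹ * t ^ n) * x := by group
      _ = t * (t ^ n * x⁻¹) * x := by rw [h3]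
      _ = t ^ (n + 1) := by rw [pow_succ']; group

/-- An element all whose powers lie in a finite set `X` has order at most `|X|`. -/
lemma orderOf_le_ncard [Finite G] {X : Set G} {t : G} (h : ∀ i : ℕ, t ^ i ∈ X) :
    orderOf t ≤ X.ncard := by
  classical
  have hpos : 0 < orderOf t := (isOfFinOrder_of_finite t).orderOf_pos
  set F : Finset G := (Finset.range (orderOf t)).image (t ^ ·) with hF
  have hcard : F.card = orderOf t := by
    rw [hF, Finset.card_image_of_injOn, Finset.card_range]
    intro a ha b hb hab
    exact pow_injOn_Iio_orderOf (by simpa using ha) (by simpa using hb) hab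
  have hsub : (F : Set G) ⊆ X := by
    intro z hz
    simp only [hF, Finset.coe_image, Set.mem_image] at hz
    obtain ⟨i, _, rfl⟩ := hz
    exact h i
  calc orderOf t = F.card := hcard.symm
    _ = (F : Set G).ncard := (Set.ncard_coe_finset F).symm
    _ ≤ X.ncard := Set.ncard_le_ncard hsub (Set.toFinite X)


lemma card_sup_le [Finite G] {M P Q : Subgroup G}
    (hM : ∀ a ∈ M, ∀ b ∈ M, a * b = b * a) (hP : P ≤ M) (hQ : Q ≤ M) :
    Nat.card (P ⊔ Q : Subgroup G) ≤ Nat.card P * Nat.card Q := by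
  classical
  let R : Subgroup G :=
    { carrier := (P : Set G) * (Q : Set G)
      one_mem' := ⟨1, P.one_mem, 1, Q.one_mem, one_mul 1⟩
      mul_mem' := by
        rintro a b ⟨p₁, hp₁, q₁, hq₁, rfl⟩ ⟨p₂, hp₂, q₂, hq₂, rfl⟩
        refine ⟨p₁ * p₂, P.mul_mem hp₁ hp₂, q₁ * q₂, Q.mul_mem hq₁ hq₂, ?_⟩
        have hcomm : q₁ * p₂ = p₂ * q₁ := hM _ (hQ hq₁) _ (hP hp₂)
        calc p₁ * p₂ * (q₁ * q₂) = p₁ * (p₂ * q₁) * q₂ := by group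
          _ = p₁ * (q₁ * p₂) * q₂ := by rw [hcomm]
          _ = p₁ * q₁ * (p₂ * q₂) := by group
      inv_mem' := by
        rintro a ⟨p, hp, q, hq, rfl⟩
        refine ⟨p⁻¹, P.inv_mem hp, q⁻¹, Q.inv_mem hq, ?_⟩
        have hcomm : p⁻¹ * q⁻¹ = q⁻¹ * p⁻¹ :=
          hM _ (M.inv_mem (hP hp)) _ (M.inv_mem (hQ hq))
        show p⁻¹ * q⁻¹ = (p * q)⁻¹
        rw [hcomm, mul_inv_rev] }
  have hle : P ⊔ Q ≤ R := by
    refine sup_le ?_ ?_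
    · intro p hp; exact ⟨p, hp, 1, Q.one_mem, mul_one p⟩
    · intro q hq; exact ⟨1, P.one_mem, q, hq, one_mul q⟩
  calc Nat.card (P ⊔ Q : Subgroup G)
      = ((P ⊔ Q : Subgroup G) : Set G).ncard := Nat.card_coe_set_eq _
    _ ≤ ((P : Set G) * (Q : Set G)).ncard := by
        exact Set.ncard_le_ncard hle (Set.toFinite _)
    _ = Nat.card ((P : Set G) * (Q : Set G) : Set G) := (Nat.card_coe_set_eq _).symm
    _ ≤ Nat.card (P : Set G) * Nat.card (Q : Set G) := Set.natCard_mul_le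
    _ = Nat.card P * Nat.card Q := rfl

lemma card_closure_le [Finite G] {M : Subgroup G}
    (hM : ∀ a ∈ M, ∀ b ∈ M, a * b = b * a) (s : Finset G) (hs : (s : Set G) ⊆ (M : Set G)) :
    Nat.card (closure (s : Set G) : Subgroup G) ≤ ∏ a ∈ s, orderOf a := by
  classical
  induction s using Finset.induction_on with
  | empty => simp [Subgroup.closure_empty]
  | insert a s' ha ih =>
    have hsa : (s' : Set G) ⊆ (M : Set G) := by
      intro x hx; exact hs (by simp [hx])
    have haM : a ∈ M := hs (by simp)
    have hkey : closure ((insert a s' : Finset G) : Set G)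
        = closure {a} ⊔ closure (s' : Set G) := by
      rw [Finset.coe_insert, Set.insert_eq, Subgroup.closure_union]
    have h1 : closure ({a} : Set G) ≤ M := by
      rw [closure_le]; simpa using haM
    have h2 : closure (s' : Set G) ≤ M := by rw [closure_le]; exact hsa
    have hcard1 : Nat.card (closure ({a} : Set G) : Subgroup G) = orderOf a := by
      rw [← Subgroup.zpowers_eq_closure]
      exact Nat.card_zpowers a
    rw [hkey, Finset.prod_insert ha]
    calc Nat.card (closure ({a} : Set G) ⊔ closure (s' : Set G) : Subgroup G)
        ≤ Nat.card (closure ({a} : Set G) : Subgroup G)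
          * Nat.card (closure (s' : Set G) : Subgroup G) := card_sup_le hM h1 h2
      _ ≤ orderOf a * ∏ x ∈ s', orderOf x := by
          rw [hcard1]; exact Nat.mul_le_mul_left _ (ih hsa)

lemma closure_normal_of_conj {S : Set G} (h : ∀ g : G, ∀ x ∈ S, g * x * g⁻¹ ∈ S) :
    (closure S).Normal := by
  constructor
  intro n hn g
  have : (closure S).map (MulAut.conj g).toMonoidHom ≤ closure S := by
    rw [MonoidHom.map_closure, closure_le]
    rintro z ⟨x, hx, rfl⟩
    exact subset_closure (by simpa [MulAut.conj] using h g x hx)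
  exact this (Subgroup.mem_map_of_mem _ hn)

lemma card_map_mul_card {B L : Subgroup G} [Finite G] [B.Normal] (hBL : B ≤ L) :
    Nat.card L = Nat.card (L.map (QuotientGroup.mk' B)) * Nat.card B := by
  classical
  let ψ : (↥L) →* G ⧸ B := (QuotientGroup.mk' B).comp L.subtype
  have hker : ψ.ker = B.subgroupOf L := by
    ext x
    simp only [ψ, MonoidHom.mem_ker, MonoidHom.comp_apply, Subgroup.coe_subtype,
      Subgroup.mem_subgroupOf, QuotientGroup.mk'_apply, QuotientGroup.eq_one_iff]
  have hrange : ψ.range = L.map (QuotientGroup.mk' B) := by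
    rw [MonoidHom.range_comp, Subgroup.range_subtype]
  have e1 : Nat.card ((↥L) ⧸ ψ.ker) = Nat.card (L.map (QuotientGroup.mk' B)) := by
    rw [← hrange]
    exact Nat.card_congr (QuotientGroup.quotientKerEquivRange ψ).toEquiv
  have e2 : Nat.card ψ.ker = Nat.card B := by
    rw [hker]
    exact Nat.card_congr (Subgroup.subgroupOfEquivOfLe hBL).toEquiv
  calc Nat.card L
      = Nat.card ((↥L) ⧸ ψ.ker) * Nat.card ψ.ker :=
        Subgroup.card_eq_card_quotient_mul_card_subgroup ψ.ker
    _ = Nat.card (L.map (QuotientGroup.mk' B)) * Nat.card B := by rw [e1, e2]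


theorem card_commutator_abelian [Finite G]
    (H K : Subgroup G) [hH : H.Normal] [hK : K.Normal]
    (hab : ∀ a ∈ (⁅H, K⁆ : Subgroup G), ∀ b ∈ (⁅H, K⁆ : Subgroup G), a * b = b * a)
    {C : ℕ} (hC : 1 ≤ C) (hX : (commSet (H : Set G) (K : Set G)).ncard ≤ C) :
    Nat.card (⁅H, K⁆ : Subgroup G) ≤ C ^ C * C ^ C := by
  classical
  set L : Subgroup G := ⁅H, K⁆ with hLdef
  have hLH : L ≤ H := Subgroup.commutator_le_left H K
  have hLK : L ≤ K := Subgroup.commutator_le_right H K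
  set X : Set G := commSet (H : Set G) (K : Set G) with hXdef
  have hXL : X ⊆ (L : Set G) := commSet_subset_commutator H K
  set T : Set G := commSet (L : Set G) (K : Set G) ∪ commSet (H : Set G) (L : Set G) with hTdef
  have hTX : T ⊆ X := by
    apply Set.union_subset
    · exact commSet_mono (SetLike.coe_subset_coe.mpr hLH) subset_rfl
    · exact commSet_mono subset_rfl (SetLike.coe_subset_coe.mpr hLK)
  have hTL : T ⊆ (L : Set G) := hTX.trans hXL
  -- each element of T has all powers inside X
  have hTpow : ∀ t ∈ T, ∀ i : ℕ, t ^ i ∈ X := by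
    rintro t (⟨x, hx, k, hk, rfl⟩ | ⟨h, hh, x, hx, rfl⟩) i
    · have htX : x⁻¹ * k⁻¹ * x * k ∈ X :=
        mem_commSet_of (SetLike.coe_subset_coe.mpr hLH hx) hk
      have hcomm : Commute x (x⁻¹ * k⁻¹ * x * k) := hab x hx _ (hXL htX)
      have hid := pow_comm_left rfl hcomm i
      rw [← hid]
      exact mem_commSet_of (SetLike.coe_subset_coe.mpr hLH (pow_mem hx i)) hk
    · have htX : h⁻¹ * x⁻¹ * h * x ∈ X :=
        mem_commSet_of hh (SetLike.coe_subset_coe.mpr hLK hx)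
      have hcomm : Commute (h⁻¹ * x⁻¹ * h * x) x := hab _ (hXL htX) x hx
      have hid := pow_comm_right rfl hcomm i
      rw [← hid]
      exact mem_commSet_of hh (SetLike.coe_subset_coe.mpr hLK (pow_mem hx i))
  have hTord : ∀ t ∈ T, orderOf t ≤ C := fun t ht =>
    le_trans (orderOf_le_ncard (hTpow t ht)) hX
  -- the subgroup B
  set B : Subgroup G := closure T with hBdef
  have hLnormal : L.Normal := Subgroup.commutator_normal H K
  haveI hBnormal : B.Normal := by
    apply closure_normal_of_conj
    rintro g x (⟨a, ha, k, hk, rfl⟩ | ⟨h, hh, a, ha, rfl⟩)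
    · refine Or.inl ⟨g * a * g⁻¹, ?_, g * k * g⁻¹, ?_, by group⟩
      · exact SetLike.mem_coe.mpr (hLnormal.conj_mem a (SetLike.mem_coe.mp ha) g)
      · exact SetLike.mem_coe.mpr (hK.conj_mem k (SetLike.mem_coe.mp hk) g)
    · refine Or.inr ⟨g * h * g⁻¹, ?_, g * a * g⁻¹, ?_, by group⟩
      · exact SetLike.mem_coe.mpr (hH.conj_mem h (SetLike.mem_coe.mp hh) g)
      · exact SetLike.mem_coe.mpr (hLnormal.conj_mem a (SetLike.mem_coe.mp ha) g)
  have hBL : B ≤ L := (closure_le L).mpr hTL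
  -- bound card of B
  have hTfin : T.Finite := Set.toFinite T
  have hBcard : Nat.card B ≤ C ^ C := by
    have hcoe : (hTfin.toFinset : Set G) = T := hTfin.coe_toFinset
    have h1 : Nat.card B ≤ ∏ a ∈ hTfin.toFinset, orderOf a := by
      have h0 := card_closure_le hab hTfin.toFinset
        (fun x hx => hTL (hTfin.mem_toFinset.mp hx))
      rwa [hcoe] at h0
    have h2 : ∏ a ∈ hTfin.toFinset, orderOf a ≤ C ^ hTfin.toFinset.card :=
      Finset.prod_le_pow_card _ _ _ (fun x hx => hTord x (hTfin.mem_toFinset.mp hx))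
    have h3 : hTfin.toFinset.card ≤ C := by
      rw [← Set.ncard_eq_toFinset_card T hTfin]
      exact le_trans (Set.ncard_le_ncard hTX (Set.toFinite X)) hX
    exact le_trans h1 (le_trans h2 (Nat.pow_le_pow_right hC h3))
  -- quotient by B
  set π : G →* G ⧸ B := QuotientGroup.mk' B with hπdef
  have hπs : Function.Surjective π := QuotientGroup.mk'_surjective B
  haveI hH' : (H.map π).Normal := hH.map π hπs
  haveI hK' : (K.map π).Normal := hK.map π hπs
  have hLmap : (⁅H.map π, K.map π⁆ : Subgroup (G ⧸ B)) = L.map π :=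
    (Subgroup.map_commutator H K π).symm
  have hab' : ∀ a ∈ (⁅H.map π, K.map π⁆ : Subgroup (G ⧸ B)),
      ∀ b ∈ (⁅H.map π, K.map π⁆ : Subgroup (G ⧸ B)), a * b = b * a := by
    rw [hLmap]
    rintro a ha b hb
    obtain ⟨x, hx, rfl⟩ := Subgroup.mem_map.mp ha
    obtain ⟨y, hy, rfl⟩ := Subgroup.mem_map.mp hb
    rw [← map_mul, ← map_mul, hab x hx y hy]
  -- centrality of the image of L with respect to images of H and K
  have hcentK : ∀ x ∈ L, ∀ k ∈ K, Commute (π x) (π k) := by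
    intro x hx k hk
    have hmem : x⁻¹ * k⁻¹ * x * k ∈ B :=
      subset_closure (Or.inl (mem_commSet_of (SetLike.mem_coe.mpr hx) (SetLike.mem_coe.mpr hk)))
    have h1 : π (x⁻¹ * k⁻¹ * x * k) = 1 := (QuotientGroup.eq_one_iff _).mpr hmem
    have h2 : ⁅(π x)⁻¹, (π k)⁻¹⁆ = 1 := by
      rw [commutatorElement_def]
      simpa [map_mul, map_inv, mul_assoc] using h1
    have h3 := commutatorElement_eq_one_iff_commute.mp h2
    simpa using h3.inv_left.inv_right
  have hcentH : ∀ h ∈ H, ∀ x ∈ L, Commute (π h) (π x) := by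
    intro h hh x hx
    have hmem : h⁻¹ * x⁻¹ * h * x ∈ B :=
      subset_closure (Or.inr (mem_commSet_of (SetLike.mem_coe.mpr hh) (SetLike.mem_coe.mpr hx)))
    have h1 : π (h⁻¹ * x⁻¹ * h * x) = 1 := (QuotientGroup.eq_one_iff _).mpr hmem
    have h2 : ⁅(π h)⁻¹, (π x)⁻¹⁆ = 1 := by
      rw [commutatorElement_def]
      simpa [map_mul, map_inv, mul_assoc] using h1
    have h3 := commutatorElement_eq_one_iff_commute.mp h2
    simpa using h3.inv_left.inv_right
  -- the commutator set in the quotient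
  set X' : Set (G ⧸ B) := commSet (↑(H.map π) : Set (G ⧸ B)) (↑(K.map π)) with hX'def
  have hX'img : X' = π '' X := commSet_map π H K
  have hX'card : X'.ncard ≤ C := by
    rw [hX'img]
    exact le_trans (Set.ncard_image_le (Set.toFinite X)) hX
  have hX'pow : ∀ z ∈ X', ∀ i : ℕ, z ^ i ∈ X' := by
    rintro z ⟨a, ha, b, hb, rfl⟩ i
    have hzmem : a⁻¹ * b⁻¹ * a * b ∈ (⁅H.map π, K.map π⁆ : Subgroup (G ⧸ B)) :=
      SetLike.mem_coe.mp (commSet_subset_commutator (H.map π) (K.map π)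
        (mem_commSet_of ha hb))
    rw [hLmap] at hzmem
    obtain ⟨x0, hx0, hx0eq⟩ := Subgroup.mem_map.mp hzmem
    obtain ⟨k0, hk0, hk0eq⟩ := Subgroup.mem_map.mp (SetLike.mem_coe.mp hb)
    have hcomm : Commute (a⁻¹ * b⁻¹ * a * b) b := by
      rw [← hx0eq, ← hk0eq]
      exact hcentK x0 hx0 k0 hk0
    have hid := pow_comm_right rfl hcomm i
    rw [← hid]
    exact mem_commSet_of ha (SetLike.mem_coe.mpr (pow_mem (SetLike.mem_coe.mp hb) i))
  have hX'ord : ∀ z ∈ X', orderOf z ≤ C := fun z hz =>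
    le_trans (orderOf_le_ncard (fun i => hX'pow z hz i)) hX'card
  -- card of the commutator in the quotient
  have hX'L : X' ⊆ ((⁅H.map π, K.map π⁆ : Subgroup (G ⧸ B)) : Set (G ⧸ B)) :=
    commSet_subset_commutator _ _
  have hX'fin : X'.Finite := Set.toFinite X'
  have hQcard : Nat.card (⁅H.map π, K.map π⁆ : Subgroup (G ⧸ B)) ≤ C ^ C := by
    have hcoe : (hX'fin.toFinset : Set (G ⧸ B)) = X' := hX'fin.coe_toFinset
    have hclos : (⁅H.map π, K.map π⁆ : Subgroup (G ⧸ B)) = closure X' :=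
      (closure_commSet _ _).symm
    have h1 : Nat.card (⁅H.map π, K.map π⁆ : Subgroup (G ⧸ B))
        ≤ ∏ a ∈ hX'fin.toFinset, orderOf a := by
      have h0 := card_closure_le (M := ⁅H.map π, K.map π⁆) hab' hX'fin.toFinset
        (fun x hx => hX'L (hX'fin.mem_toFinset.mp hx))
      rw [hcoe] at h0
      rw [hclos]
      exact h0
    have h2 : ∏ a ∈ hX'fin.toFinset, orderOf a ≤ C ^ hX'fin.toFinset.card :=
      Finset.prod_le_pow_card _ _ _
        (fun x hx => hX'ord x (hX'fin.mem_toFinset.mp hx))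
    have h3 : hX'fin.toFinset.card ≤ C := by
      rw [← Set.ncard_eq_toFinset_card X' hX'fin]
      exact hX'card
    exact le_trans h1 (le_trans h2 (Nat.pow_le_pow_right hC h3))
  -- combine
  have hsplit := card_map_mul_card (G := G) (B := B) (L := L) hBL
  rw [hsplit]
  rw [hLmap] at hQcard
  exact Nat.mul_le_mul hQcard hBcard


theorem main_bound {G : Type*} [Group G] [Finite G] (H K : Subgroup G)
    [hH : H.Normal] [hK : K.Normal] {C : ℕ} (hC : 1 ≤ C)
    (hX : (commSet (H : Set G) (K : Set G)).ncard ≤ C) :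
    Nat.card (⁅H, K⁆ : Subgroup G)
      ≤ C ^ C * C ^ C * ((Finset.range (C + 1)).sup Subgroup.cardCommutatorBound) := by
  classical
  set L : Subgroup G := ⁅H, K⁆ with hLdef
  haveI hLnormal : L.Normal := Subgroup.commutator_normal H K
  set L' : Subgroup G := ⁅L, L⁆ with hL'def
  haveI hL'normal : L'.Normal := Subgroup.commutator_normal L L
  have hLH : L ≤ H := Subgroup.commutator_le_left H K
  have hLK : L ≤ K := Subgroup.commutator_le_right H K
  have hL'L : L' ≤ L := Subgroup.commutator_le_left L L
  set π : G →* G ⧸ L' := QuotientGroup.mk' L' with hπdef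
  have hπs : Function.Surjective π := QuotientGroup.mk'_surjective L'
  -- Schur-type bound for |L'| using Mathlib
  have hCommSetCard : Nat.card (commutatorSet ↥L) ≤ C := by
    have hmem : ∀ z ∈ commutatorSet ↥L, (z : G) ∈ commSet (H : Set G) (K : Set G) := by
      rintro z ⟨a, b, rfl⟩
      rw [commSet_eq]
      refine ⟨(a : G), hLH a.2, (b : G), hLK b.2, ?_⟩
      simp [commutatorElement_def]
    let f : commutatorSet ↥L → (commSet (H : Set G) (K : Set G)) :=
      fun z => ⟨((z : ↥L) : G), hmem z z.2⟩
    have hfinj : Function.Injective f := by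
      intro z₁ z₂ hz
      have hval : ((z₁ : ↥L) : G) = ((z₂ : ↥L) : G) := congrArg (fun w : (commSet (H : Set G) (K : Set G)) => (w : G)) hz
      exact Subtype.ext (Subtype.ext hval)
    calc Nat.card (commutatorSet ↥L)
        ≤ Nat.card (commSet (H : Set G) (K : Set G)) := Nat.card_le_card_of_injective f hfinj
      _ = (commSet (H : Set G) (K : Set G)).ncard := Nat.card_coe_set_eq _
      _ ≤ C := hX
  have hL'eq : Nat.card (_root_.commutator ↥L) = Nat.card L' := by
    have htop : (⊤ : Subgroup ↥L).map L.subtype = L := by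
      rw [← MonoidHom.range_eq_map, Subgroup.range_subtype]
    have hmapc : (_root_.commutator ↥L).map L.subtype = L' := by
      rw [_root_.commutator, Subgroup.map_commutator, htop]
    rw [← hmapc]
    exact Nat.card_congr
      (Subgroup.equivMapOfInjective _ L.subtype (Subgroup.subtype_injective L)).toEquiv
  have hL'card : Nat.card L' ≤ (Finset.range (C + 1)).sup Subgroup.cardCommutatorBound := by
    rw [← hL'eq]
    calc Nat.card (_root_.commutator ↥L)
        ≤ Subgroup.cardCommutatorBound (Nat.card (commutatorSet ↥L)) :=
          Subgroup.card_commutator_le_of_finite_commutatorSet ↥L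
      _ ≤ (Finset.range (C + 1)).sup Subgroup.cardCommutatorBound :=
          Finset.le_sup (Finset.mem_range.mpr (Nat.lt_succ_of_le hCommSetCard))
  -- abelian quotient bound
  haveI hH' : (H.map π).Normal := hH.map π hπs
  haveI hK' : (K.map π).Normal := hK.map π hπs
  have hLmap : (⁅H.map π, K.map π⁆ : Subgroup (G ⧸ L')) = L.map π :=
    (Subgroup.map_commutator H K π).symm
  have habel : ∀ a ∈ (⁅H.map π, K.map π⁆ : Subgroup (G ⧸ L')),
      ∀ b ∈ (⁅H.map π, K.map π⁆ : Subgroup (G ⧸ L')), a * b = b * a := by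
    rw [hLmap]
    rintro a ha b hb
    obtain ⟨x, hx, rfl⟩ := Subgroup.mem_map.mp ha
    obtain ⟨y, hy, rfl⟩ := Subgroup.mem_map.mp hb
    have hone : ⁅π x, π y⁆ = 1 := by
      rw [← map_commutatorElement]
      exact (QuotientGroup.eq_one_iff _).mpr (commutator_mem_commutator hx hy)
    exact (commutatorElement_eq_one_iff_commute.mp hone).eq
  have hX'card : (commSet (↑(H.map π) : Set (G ⧸ L')) (↑(K.map π))).ncard ≤ C := by
    rw [commSet_map]
    exact le_trans (Set.ncard_image_le (Set.toFinite _)) hX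
  have hQbound := card_commutator_abelian (H.map π) (K.map π) habel hC hX'card
  rw [hLmap] at hQbound
  calc Nat.card L = Nat.card (L.map π) * Nat.card L' := card_map_mul_card hL'L
    _ ≤ (C ^ C * C ^ C) * ((Finset.range (C + 1)).sup Subgroup.cardCommutatorBound) :=
        Nat.mul_le_mul hQbound hL'card


end StmtAux

open scoped commutatorElement

/-- If `G` is finite with normal subgroups `H, K` and `|Comm(H,K)| ≤ C`, then `[H,K]`
has `C`-bounded order; more precisely, if `Comm(H,K) = {[h₁,k₁],…,[h_C,k_C]}` then
`H₀ = ⟨h₁,…,h_C, Comm(H,K)⟩` and `K₀ = ⟨k₁,…,k_C, Comm(H,K)⟩` satisfy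
`[H₀,K₀] = [H,K]`. -/
theorem stmt_15 :
    ∃ f : ℕ → ℕ, ∀ (G : Type) (_ : Group G) (_ : Finite G) (H K : Subgroup G),
      H.Normal → K.Normal → ∀ C : ℕ,
      (commSet (H : Set G) (K : Set G)).ncard ≤ C →
      Nat.card ↥(⁅H, K⁆ : Subgroup G) ≤ f C ∧
      ∀ h k : Fin C → G, (∀ i, h i ∈ H) → (∀ i, k i ∈ K) →
        commSet (H : Set G) (K : Set G) =
          Set.range (fun i => (h i)⁻¹ * (k i)⁻¹ * h i * k i) →
        ⁅Subgroup.closure (Set.range h ∪ commSet (H : Set G) (K : Set G)),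
          Subgroup.closure (Set.range k ∪ commSet (H : Set G) (K : Set G))⁆ =
          (⁅H, K⁆ : Subgroup G) := by
  classical
  refine ⟨fun C => C ^ C * C ^ C * ((Finset.range (C + 1)).sup Subgroup.cardCommutatorBound),
    ?_⟩
  intro G instG instFin H K hH hK C hX
  haveI := hH
  haveI := hK
  constructor
  · rcases Nat.eq_zero_or_pos C with hC0 | hC
    · exfalso
      subst hC0
      have hempty : commSet (H : Set G) (K : Set G) = ∅ :=
        (Set.ncard_eq_zero (Set.toFinite _)).mp (Nat.le_zero.mp hX)
      have := StmtAux.one_mem_commSet H K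
      rw [hempty] at this
      exact this
    · exact StmtAux.main_bound H K hC hX
  · intro h k hh hk hEq
    apply le_antisymm
    · refine Subgroup.commutator_mono ?_ ?_
      · rw [Subgroup.closure_le]
        refine Set.union_subset ?_ ?_
        · rintro z ⟨i, rfl⟩; exact hh i
        · exact (StmtAux.commSet_subset_commutator H K).trans
            (SetLike.coe_subset_coe.mpr (Subgroup.commutator_le_left H K))
      · rw [Subgroup.closure_le]
        refine Set.union_subset ?_ ?_
        · rintro z ⟨i, rfl⟩; exact hk i
        · exact (StmtAux.commSet_subset_commutator H K).trans
            (SetLike.coe_subset_coe.mpr (Subgroup.commutator_le_right H K))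
    · rw [← StmtAux.closure_commSet H K, Subgroup.closure_le]
      intro z hz
      have hz' := hz
      rw [hEq] at hz'
      obtain ⟨i, hi⟩ := hz'
      have h1 : (h i)⁻¹ ∈ Subgroup.closure (Set.range h ∪ commSet (H : Set G) (K : Set G)) :=
        inv_mem (Subgroup.subset_closure (Set.mem_union_left _ ⟨i, rfl⟩))
      have h2 : (k i)⁻¹ ∈ Subgroup.closure (Set.range k ∪ commSet (H : Set G) (K : Set G)) :=
        inv_mem (Subgroup.subset_closure (Set.mem_union_left _ ⟨i, rfl⟩))
      have hzeq : z = ⁅(h i)⁻¹, (k i)⁻¹⁆ := by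
        simp only [] at hi
        rw [commutatorElement_def, inv_inv, inv_inv, ← hi]
      rw [SetLike.mem_coe, hzeq]
      exact Subgroup.commutator_mem_commutator h1 h2
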